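/- For a = 64m⁴n⁴(m² - n²)²P², b = (m² + n²)²(m⁴ - 6m²n² + n⁴)²P², c = 16m²n²(m² - n²)⁴Q², where P = m¹² - 26m¹⁰n² + 79m⁸n⁴ - 44m⁶n⁶ + 79m⁴n⁸ - 26m²n¹⁰ + n¹² and Q = m¹² - 10m¹⁰n² + 15m⁸n⁴ - 204m⁶n⁶ + 15m⁴n⁸ - 10m²n¹⁰ + n¹², the three elementary symmetric functions a + b + c, ab + bc + ca, abc are all perfect squares. -/
import Mathlib

theorem allsquaresol3 (m n : ℤ) :
    let P := m ^ 12 - 26 * m ^ 10 * n ^ 2 + 79 * m ^ 8 * n ^ 4 - 44 * m ^ 6 * n ^ 6 +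
      79 * m ^ 4 * n ^ 8 - 26 * m ^ 2 * n ^ 10 + n ^ 12
    let Q := m ^ 12 - 10 * m ^ 10 * n ^ 2 + 15 * m ^ 8 * n ^ 4 - 204 * m ^ 6 * n ^ 6 +
      15 * m ^ 4 * n ^ 8 - 10 * m ^ 2 * n ^ 10 + n ^ 12
    let a := 64 * m ^ 4 * n ^ 4 * (m ^ 2 - n ^ 2) ^ 2 * P ^ 2
    let b := (m ^ 2 + n ^ 2) ^ 2 * (m ^ 4 - 6 * m ^ 2 * n ^ 2 + n ^ 4) ^ 2 * P ^ 2
    let c := 16 * m ^ 2 * n ^ 2 * (m ^ 2 - n ^ 2) ^ 4 * Q ^ 2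
    (∃ f : ℤ, a + b + c = f ^ 2) ∧ (∃ g : ℤ, a * b + b * c + c * a = g ^ 2) ∧
      (∃ k : ℤ, a * b * c = k ^ 2) := by
  intro P Q a b c
  refine ⟨⟨m ^ 18 - 23 * m ^ 16 * n ^ 2 + 260 * m ^ 14 * n ^ 4 - 652 * m ^ 12 * n ^ 6 +
      670 * m ^ 10 * n ^ 8 + 670 * m ^ 8 * n ^ 10 - 652 * m ^ 6 * n ^ 12 +
      260 * m ^ 4 * n ^ 14 - 23 * m ^ 2 * n ^ 16 + n ^ 18, ?_⟩,
    ⟨4 * m * n ^ 35 - 164 * m ^ 3 * n ^ 33 + 1984 * m ^ 5 * n ^ 31 - 5120 * m ^ 7 * n ^ 29 -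
      66096 * m ^ 9 * n ^ 27 + 473456 * m ^ 11 * n ^ 25 - 1437312 * m ^ 13 * n ^ 23 +
      2795328 * m ^ 15 * n ^ 21 - 3623688 * m ^ 17 * n ^ 19 + 3623688 * m ^ 19 * n ^ 17 -
      2795328 * m ^ 21 * n ^ 15 + 1437312 * m ^ 23 * n ^ 13 - 473456 * m ^ 25 * n ^ 11 +
      66096 * m ^ 27 * n ^ 9 + 5120 * m ^ 29 * n ^ 7 - 1984 * m ^ 31 * n ^ 5 +
      164 * m ^ 33 * n ^ 3 - 4 * m ^ 35 * n, ?_⟩,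
    ⟨32 * m ^ 3 * n ^ 3 * (m ^ 2 - n ^ 2) ^ 3 * (m ^ 2 + n ^ 2) *
      (m ^ 4 - 6 * m ^ 2 * n ^ 2 + n ^ 4) * P ^ 2 * Q, ?_⟩⟩ <;>
    simp only [P, Q, a, b, c] <;> ring
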